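/- Let β − α ∈ (0, 2π) and let c : [α, β] → ℝ be continuous with c(θ) > 0 for all θ. Then the 2×2 matrix K = ∫_α^β e_r(θ)⊗e_r(θ) / c(θ) dθ is symmetric and positive definite; that is, v·Kv > 0 for every nonzero v ∈ ℝ². In particular K is invertible. (Applied with c = (C⁻¹)_{rrrr}, this shows the Flamant stiffness matrix K_Fl and the Flamant quadratic forms Q_Fl and Q*_Fl are positive definite.) -/
import Mathlib

open Matrix MeasureTheory Set

noncomputable section

abbrev M2 := Matrix (Fin 2) (Fin 2) ℝ
abbrev V2 := Fin 2 → ℝ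

def er (θ : ℝ) : V2 := ![Real.cos θ, Real.sin θ]

/-- `K = ∫_α^β e_r(θ)⊗e_r(θ) / c(θ) dθ`, entrywise. -/
def Kmat (α β : ℝ) (c : ℝ → ℝ) : M2 :=
  Matrix.of fun i j => ∫ θ in Set.Ioo α β, er θ i * er θ j / c θ

/-- For `β − α ∈ (0, 2π)` and a continuous positive weight `c`, the matrix
`K = ∫_α^β e_r ⊗ e_r / c dθ` is symmetric and positive definite, hence invertible. -/
theorem Kmat_posDef (α β : ℝ) (hαβ : α < β) (h2π : β - α < 2 * Real.pi)
    (c : ℝ → ℝ) (hc : ContinuousOn c (Set.Icc α β))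
    (hcpos : ∀ θ ∈ Set.Icc α β, 0 < c θ) :
    (Kmat α β c).transpose = Kmat α β c ∧
    (∀ v : V2, v ≠ 0 → 0 < v ⬝ᵥ (Kmat α β c).mulVec v) ∧
    IsUnit (Kmat α β c) := by
  have hcne : ∀ θ ∈ Set.Icc α β, c θ ≠ 0 := fun θ hθ => (hcpos θ hθ).ne'
  -- integrability of each entry
  have hint : ∀ i j : Fin 2, IntegrableOn (fun θ => er θ i * er θ j / c θ) (Ioo α β) := by
    intro i j
    have hcont : ContinuousOn (fun θ => er θ i * er θ j / c θ) (Icc α β) := by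
      apply ContinuousOn.div
      · apply ContinuousOn.mul
        · fin_cases i <;> simp [er] <;> fun_prop
        · fin_cases j <;> simp [er] <;> fun_prop
      · exact hc
      · exact hcne
    exact (hcont.integrableOn_Icc).mono_set Ioo_subset_Icc_self
  -- key formula
  have key : ∀ v : V2, v ⬝ᵥ (Kmat α β c).mulVec v
      = ∫ θ in Ioo α β, (v 0 * Real.cos θ + v 1 * Real.sin θ) ^ 2 / c θ := by
    intro v
    have hij : ∀ i j : Fin 2, Integrable (fun θ => v i * (er θ i * er θ j / c θ) * v j)
        (volume.restrict (Ioo α β)) := fun i j => ((hint i j).const_mul (v i)).mul_const (v j)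
    have expand : (fun θ => (v 0 * Real.cos θ + v 1 * Real.sin θ) ^ 2 / c θ)
        = fun θ => ∑ i : Fin 2, ∑ j : Fin 2, v i * (er θ i * er θ j / c θ) * v j := by
      funext θ; simp [Fin.sum_univ_two, er]; ring
    rw [expand, integral_finset_sum _ (fun i _ => (integrable_finset_sum _ (fun j _ => hij i j)))]
    have inner : ∀ i : Fin 2, ∫ θ in Ioo α β, ∑ j : Fin 2, v i * (er θ i * er θ j / c θ) * v j
        = ∑ j : Fin 2, v i * (∫ θ in Ioo α β, er θ i * er θ j / c θ) * v j := by
      intro i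
      rw [integral_finset_sum _ (fun j _ => hij i j)]
      refine Finset.sum_congr rfl fun j _ => ?_
      rw [integral_mul_const, MeasureTheory.integral_const_mul]
    simp only [inner]
    simp only [Kmat, dotProduct, mulVec, Fin.sum_univ_two, of_apply]
    ring
  -- positivity
  have hpos : ∀ v : V2, v ≠ 0 → 0 < v ⬝ᵥ (Kmat α β c).mulVec v := by
    intro v hv
    rw [key v]
    set g : ℝ → ℝ := fun θ => (v 0 * Real.cos θ + v 1 * Real.sin θ) ^ 2 / c θ with hg
    have hgint : IntegrableOn g (Ioo α β) := by
      have : g = fun θ => (v 0 * v 0) * (er θ 0 * er θ 0 / c θ)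
          + ((v 0 * v 1) * (er θ 0 * er θ 1 / c θ)
            + ((v 1 * v 0) * (er θ 1 * er θ 0 / c θ)
              + (v 1 * v 1) * (er θ 1 * er θ 1 / c θ))) := by
        funext θ; simp [g, er]; ring
      rw [this]
      exact ((hint 0 0).const_mul _).add (((hint 0 1).const_mul _).add
        (((hint 1 0).const_mul _).add ((hint 1 1).const_mul _)))
    have hgnn : 0 ≤ᶠ[ae (volume.restrict (Ioo α β))] g := by
      filter_upwards [ae_restrict_mem measurableSet_Ioo] with θ hθ
      exact div_nonneg (sq_nonneg _) (hcpos θ (Ioo_subset_Icc_self hθ)).le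
    rw [setIntegral_pos_iff_support_of_nonneg_ae hgnn hgint]
    -- find a point where v·e_r ≠ 0
    obtain ⟨θ₀, hθ₀, hne⟩ : ∃ θ₀ ∈ Ioo α β, v 0 * Real.cos θ₀ + v 1 * Real.sin θ₀ ≠ 0 := by
      by_contra h
      push_neg at h
      -- then derivative vanishes too, forcing v = 0
      set θ₁ := (α + β) / 2 with hθ₁
      have hmem : θ₁ ∈ Ioo α β := ⟨by linarith, by linarith⟩
      have h1 : v 0 * Real.cos θ₁ + v 1 * Real.sin θ₁ = 0 := h θ₁ hmem
      have hev : (fun θ => v 0 * Real.cos θ + v 1 * Real.sin θ) =ᶠ[nhds θ₁] (fun _ => (0:ℝ)) := by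
        filter_upwards [isOpen_Ioo.mem_nhds hmem] with θ hθ using h θ hθ
      have hderiv : deriv (fun θ => v 0 * Real.cos θ + v 1 * Real.sin θ) θ₁ = 0 := by
        rw [hev.deriv_eq]; simp
      have hd : HasDerivAt (fun θ => v 0 * Real.cos θ + v 1 * Real.sin θ)
          (v 0 * (-Real.sin θ₁) + v 1 * Real.cos θ₁) θ₁ := by
        exact ((Real.hasDerivAt_cos θ₁).const_mul (v 0)).add
          ((Real.hasDerivAt_sin θ₁).const_mul (v 1))
      have h2 : v 0 * (-Real.sin θ₁) + v 1 * Real.cos θ₁ = 0 := by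
        rw [← hd.deriv]; exact hderiv
      have hpyth := Real.sin_sq_add_cos_sq θ₁
      have hv0 : v 0 = 0 := by linear_combination Real.cos θ₁ * h1 - Real.sin θ₁ * h2 - v 0 * hpyth
      have hv1 : v 1 = 0 := by linear_combination Real.sin θ₁ * h1 + Real.cos θ₁ * h2 - v 1 * hpyth
      apply hv
      funext i; fin_cases i <;> assumption
    -- open set where g > 0 inside Ioo
    have hcontf : Continuous (fun θ => v 0 * Real.cos θ + v 1 * Real.sin θ) := by fun_prop
    have hU : IsOpen {θ | θ ∈ Ioo α β ∧ v 0 * Real.cos θ + v 1 * Real.sin θ ≠ 0} := by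
      have : {θ | θ ∈ Ioo α β ∧ v 0 * Real.cos θ + v 1 * Real.sin θ ≠ 0}
          = Ioo α β ∩ (fun θ => v 0 * Real.cos θ + v 1 * Real.sin θ) ⁻¹' {0}ᶜ := by
        ext θ; simp [and_comm]
      rw [this]
      exact isOpen_Ioo.inter (isOpen_compl_singleton.preimage hcontf)
    have hsub : {θ | θ ∈ Ioo α β ∧ v 0 * Real.cos θ + v 1 * Real.sin θ ≠ 0}
        ⊆ Function.support g ∩ Ioo α β := by
      rintro θ ⟨hθ, hne'⟩
      refine ⟨?_, hθ⟩
      simp only [Function.mem_support, hg]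
      exact ne_of_gt (div_pos (by positivity) (hcpos θ (Ioo_subset_Icc_self hθ)))
    calc (0:ENNReal) < volume {θ | θ ∈ Ioo α β ∧ v 0 * Real.cos θ + v 1 * Real.sin θ ≠ 0} :=
          hU.measure_pos volume ⟨θ₀, hθ₀, hne⟩
      _ ≤ volume (Function.support g ∩ Ioo α β) := measure_mono hsub
  refine ⟨?_, hpos, ?_⟩
  · ext i j
    simp only [Kmat, transpose_apply, of_apply]
    congr 1; funext θ; ring
  · rw [Matrix.isUnit_iff_isUnit_det, isUnit_iff_ne_zero]
    intro hdet
    obtain ⟨w, hw, hKw⟩ := Matrix.exists_mulVec_eq_zero_iff.mpr hdet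
    have := hpos w hw
    rw [hKw] at this
    simp at this
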